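/- Let θ ∈ [-π/2, π/2], c = sin θ, and G(z) = (1/2)(z + 1/z) - i·c·Log z. Then the function z ↦ S_G(z) - (4i sin θ)/z, where S_G = (G''/G')' - (1/2)(G''/G')² is the Schwarzian derivative of G, extends holomorphically to a punctured neighborhood of 0 with removable singularity at 0; equivalently, S_G has a simple pole at 0 with residue 4i sin θ. -/

import Mathlib

open Complex Real

set_option maxHeartbeats 1000000 in
/-- For `θ ∈ [-π/2, π/2]` and `G(z) = (1/2)(z + 1/z) - i sin θ · Log z`, the
Schwarzian derivative `S_G = (G''/G')' - (1/2)(G''/G')²` has a simple pole at `0`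
with residue `4 i sin θ`: the function `z ↦ S_G z - 4 i sin θ / z` agrees, on the
slit-plane part of a neighborhood of `0`, with a function holomorphic in a full
neighborhood of `0`. -/
theorem schwarzian_G_theta_simple_pole (θ : ℝ) (hθ : θ ∈ Set.Icc (-(π / 2)) (π / 2))
    (G SG : ℂ → ℂ)
    (hG : G = fun w : ℂ => (1 / 2) * (w + 1 / w) - Complex.I * (Real.sin θ : ℂ) * Complex.log w)
    (hSG : SG = fun z : ℂ =>
      deriv (fun w => deriv (deriv G) w / deriv G w) z
        - (1 / 2) * (deriv (deriv G) z / deriv G z) ^ 2) :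
    ∃ U : Set ℂ, IsOpen U ∧ (0 : ℂ) ∈ U ∧ ∃ g : ℂ → ℂ, DifferentiableOn ℂ g U ∧
      ∀ z ∈ U, z ∈ Complex.slitPlane →
        SG z - (4 * Complex.I * (Real.sin θ : ℂ)) / z = g z := by
  set c : ℂ := (Real.sin θ : ℂ) with hcdef
  have hc1 : ‖c‖ ≤ 1 := by
    rw [hcdef, Complex.norm_real, Real.norm_eq_abs]
    exact abs_le.mpr ⟨Real.neg_one_le_sin θ, Real.sin_le_one θ⟩
  set g1 : ℂ → ℂ := fun x => 1/2 - (1/2) * (x^2)⁻¹ - Complex.I * c * x⁻¹ with hg1def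
  set g2 : ℂ → ℂ := fun x => (x^3)⁻¹ + Complex.I * c * (x^2)⁻¹ with hg2def
  set g3 : ℂ → ℂ := fun x => -3 * (x^4)⁻¹ - 2 * Complex.I * c * (x^3)⁻¹ with hg3def
  -- first derivative of G on the slit plane
  have hA : ∀ w ∈ Complex.slitPlane, HasDerivAt G (g1 w) w := by
    intro w hw
    have hw0 : w ≠ 0 := Complex.slitPlane_ne_zero hw
    have h1 : HasDerivAt (fun x : ℂ => (1/2) * (x + x⁻¹)) ((1/2) * (1 + -(w^2)⁻¹)) w :=
      ((hasDerivAt_id w).add (hasDerivAt_inv hw0)).const_mul (1/2 : ℂ)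
    have h2 : HasDerivAt (fun x : ℂ => Complex.I * c * Complex.log x) (Complex.I * c * w⁻¹) w :=
      (Complex.hasDerivAt_log hw).const_mul _
    have h3 := h1.sub h2
    rw [hG]
    convert h3 using 1
    · rfl
    · rfl
    · funext x; simp only [Pi.sub_apply]; ring_nf
    · rw [hg1def]; ring
  -- second derivative of G away from 0
  have hB : ∀ w : ℂ, w ≠ 0 → HasDerivAt g1 (g2 w) w := by
    intro w hw0
    have p1 : HasDerivAt (fun x : ℂ => x^2) (2*w) w := by
      simpa using hasDerivAt_pow 2 w
    have p2 : HasDerivAt (fun x : ℂ => (x^2)⁻¹) (-(2*w)/((w^2)^2)) w :=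
      p1.inv (pow_ne_zero 2 hw0)
    have p3 : HasDerivAt (fun x : ℂ => (1/2 : ℂ) * (x^2)⁻¹) ((1/2 : ℂ) * (-(2*w)/((w^2)^2))) w :=
      p2.const_mul _
    have p4 : HasDerivAt (fun x : ℂ => Complex.I * c * x⁻¹) (Complex.I * c * -(w^2)⁻¹) w :=
      (hasDerivAt_inv hw0).const_mul _
    have p5 := ((p3.const_sub (1/2 : ℂ)).sub p4)
    rw [hg1def]
    convert p5 using 1
    · rfl
    · rfl
    · rfl
    rw [hg2def]
    field_simp
    ring
  -- third derivative of G away from 0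
  have hC : ∀ w : ℂ, w ≠ 0 → HasDerivAt g2 (g3 w) w := by
    intro w hw0
    have p1 : HasDerivAt (fun x : ℂ => x^3) (3*w^2) w := by
      simpa using hasDerivAt_pow 3 w
    have p2 : HasDerivAt (fun x : ℂ => (x^3)⁻¹) (-(3*w^2)/((w^3)^2)) w :=
      p1.inv (pow_ne_zero 3 hw0)
    have q1 : HasDerivAt (fun x : ℂ => x^2) (2*w) w := by
      simpa using hasDerivAt_pow 2 w
    have q2 : HasDerivAt (fun x : ℂ => (x^2)⁻¹) (-(2*w)/((w^2)^2)) w :=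
      q1.inv (pow_ne_zero 2 hw0)
    have q3 : HasDerivAt (fun x : ℂ => Complex.I * c * (x^2)⁻¹)
        (Complex.I * c * (-(2*w)/((w^2)^2))) w := q2.const_mul _
    have p5 := p2.add q3
    rw [hg2def]
    convert p5 using 1
    · rfl
    · rfl
    · rfl
    rw [hg3def]
    field_simp
    ring
  have hEq1 : Set.EqOn (deriv G) g1 Complex.slitPlane := fun w hw => (hA w hw).deriv
  have hEq2 : Set.EqOn (deriv (deriv G)) g2 Complex.slitPlane := by
    intro w hw
    have hev : deriv G =ᶠ[nhds w] g1 :=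
      Filter.eventuallyEq_of_mem (Complex.isOpen_slitPlane.mem_nhds hw) hEq1
    rw [hev.deriv_eq]
    exact (hB w (Complex.slitPlane_ne_zero hw)).deriv
  -- the denominator is nonzero on the ball
  have hD : ∀ z ∈ Metric.ball (0 : ℂ) (1/4), z^2 - 2*Complex.I*c*z - 1 ≠ 0 := by
    intro z hz heq
    have hzn : ‖z‖ < 1/4 := by simpa [Metric.mem_ball, dist_eq_norm] using hz
    have hfac : z * (z - 2*Complex.I*c) = 1 := by linear_combination heq
    have h1 : (1:ℝ) = ‖z‖ * ‖z - 2*Complex.I*c‖ := by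
      rw [← norm_mul, hfac, norm_one]
    have h2 : ‖z - 2*Complex.I*c‖ ≤ ‖z‖ + 2 * ‖c‖ := by
      calc ‖z - 2*Complex.I*c‖ ≤ ‖z‖ + ‖2*Complex.I*c‖ := norm_sub_le _ _
        _ = ‖z‖ + 2 * ‖c‖ := by
            rw [norm_mul, norm_mul, Complex.norm_I]
            simp
    have hz0 : (0:ℝ) ≤ ‖z‖ := norm_nonneg _
    nlinarith [h1, h2, hzn, hc1, hz0]
  refine ⟨Metric.ball (0 : ℂ) (1/4), Metric.isOpen_ball, by simp [Metric.mem_ball], ?_⟩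
  refine ⟨fun z => (-4*Complex.I*c*z^3 - 16*c^2*z^2 + 4*Complex.I*c*(1+4*c^2)*z + 14*c^2 - 6)
      / ((z^2 - 2*Complex.I*c*z - 1)^2), ?_, ?_⟩
  · apply DifferentiableOn.div
    · apply Differentiable.differentiableOn
      fun_prop
    · apply Differentiable.differentiableOn
      fun_prop
    · intro z hz
      exact pow_ne_zero 2 (hD z hz)
  · intro z hzU hzS
    have hz0 : z ≠ 0 := Complex.slitPlane_ne_zero hzS
    have hDz : z^2 - 2*Complex.I*c*z - 1 ≠ 0 := hD z hzU
    have hg1z : g1 z ≠ 0 := by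
      have : g1 z = (z^2 - 2*Complex.I*c*z - 1) / (2*z^2) := by
        rw [hg1def]; field_simp; ring
      rw [this]
      exact div_ne_zero hDz (by simp [hz0])
    -- derivative of the quotient
    have hdivder : HasDerivAt (fun w => g2 w / g1 w)
        ((g3 z * g1 z - g2 z * g2 z) / (g1 z)^2) z :=
      (hC z hz0).div (hB z hz0) hg1z
    have hevq : (fun w => deriv (deriv G) w / deriv G w) =ᶠ[nhds z] (fun w => g2 w / g1 w) :=
      Filter.eventuallyEq_of_mem (Complex.isOpen_slitPlane.mem_nhds hzS)
        (fun w hw => by rw [hEq1 hw, hEq2 hw])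
    have hkey : deriv (fun w => deriv (deriv G) w / deriv G w) z
        = (g3 z * g1 z - g2 z * g2 z) / (g1 z)^2 := by
      rw [hevq.deriv_eq]; exact hdivder.deriv
    have hP : g1 z = (z^2 - 2*Complex.I*c*z - 1) / (2*z^2) := by
      rw [hg1def]; field_simp; ring
    have hQ : g2 z = (1 + Complex.I*c*z) / z^3 := by
      rw [hg2def]; field_simp
    have hR : g3 z = (-3 - 2*Complex.I*c*z) / z^4 := by
      rw [hg3def]; field_simp
    have hSGz : SG z = (g3 z * g1 z - (3/2) * (g2 z)^2) / (g1 z)^2 := by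
      rw [hSG]
      simp only [hkey, hEq1 hzS, hEq2 hzS]
      rw [div_pow]
      ring
    have hSGval : SG z = (2*((-3-2*Complex.I*c*z)*(z^2-2*Complex.I*c*z-1) - 3*(1+Complex.I*c*z)^2))
        / (z^2 * (z^2-2*Complex.I*c*z-1)^2) := by
      rw [hSGz, eq_div_iff (by exact mul_ne_zero (pow_ne_zero 2 hz0) (pow_ne_zero 2 hDz)),
        div_mul_eq_mul_div, div_eq_iff (pow_ne_zero 2 hg1z), hP, hQ, hR]
      field_simp [hz0]
    rw [hSGval]
    rw [div_sub_div _ _ (mul_ne_zero (pow_ne_zero 2 hz0) (pow_ne_zero 2 hDz)) hz0,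
      div_eq_div_iff (mul_ne_zero (mul_ne_zero (pow_ne_zero 2 hz0) (pow_ne_zero 2 hDz)) hz0)
        (pow_ne_zero 2 hDz)]
    linear_combination ((-14:ℂ)*c^2*z^3 + (44:ℂ)*c^2*z^5 + (-46:ℂ)*c^2*z^7 + (16:ℂ)*c^2*z^9
      + (-72:ℂ)*Complex.I^1*c^3*z^4 + (152:ℂ)*Complex.I^1*c^3*z^6 + (-80:ℂ)*Complex.I^1*c^3*z^8
      + (-120:ℂ)*Complex.I^2*c^4*z^5 + (128:ℂ)*Complex.I^2*c^4*z^7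
      + (-64:ℂ)*Complex.I^3*c^5*z^6) * Complex.I_sq
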